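/- For every even integer k ≥ 4, the probability distribution D that takes value 1 with probability 1/2 + 1/(3k) and value −1 with probability 1/2 − 1/(3k) satisfies the k-sample median constraint, and E[D] = 2/(3k). In particular θ_k ≥ 2/(3k) for even k ≥ 4, so θ_k = Ω(1/k) for all k ≥ 2. -/

import Mathlib

open MeasureTheory

/-- A probability distribution `μ` on `[-1,1]` satisfies the `k`-sample median constraint if
for `k` i.i.d. samples `Y_1, …, Y_k ~ μ`, `Pr[Y_1 + ⋯ + Y_k ≤ 0] ≥ 1/2`. -/
def MedianConstraint (k : ℕ) (μ : Measure ℝ) : Prop :=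
  (1 : ENNReal) / 2 ≤ Measure.pi (fun _ : Fin k => μ) {y | ∑ i, y i ≤ 0}

open ENNReal


lemma key1 (m : ℕ) (hm : 2 ≤ m) : ∀ i : ℕ,
    (m - i) * (3*m+1)^(2*i+1) ≤ (m + i + 1) * (3*m-1)^(2*i+1) := by
  intro i
  induction i with
  | zero =>
    simp only [Nat.mul_zero, pow_one, Nat.sub_zero, Nat.zero_add]
    zify [show 1 ≤ 3*m by omega]
    nlinarith [hm]
  | succ i ih =>
    rcases le_or_gt m (i+1) with h | h
    · simp [Nat.sub_eq_zero_of_le h]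
    · zify [show i ≤ m by omega, show i+1 ≤ m by omega, show 1 ≤ 3*m by omega] at ih ⊢
      have hcast : (2:ℤ) ≤ m := by exact_mod_cast hm
      have hi : (i:ℤ)+1 < m := by exact_mod_cast h
      have hb0 : (0:ℤ) < 3*(m:ℤ)-1 := by linarith
      have ha0 : (0:ℤ) < 3*(m:ℤ)+1 := by linarith
      have hx : (0:ℤ) < (3*(m:ℤ)+1)^(2*i+1) := pow_pos ha0 _
      have hy : (0:ℤ) < (3*(m:ℤ)-1)^(2*i+1) := pow_pos hb0 _
      have core : (3*(m:ℤ)+1)^2*(((m:ℤ)-i-1)*((m:ℤ)+i+1))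
          ≤ (3*(m:ℤ)-1)^2*(((m:ℤ)-i)*((m:ℤ)+i+2)) := by
        nlinarith [sq_nonneg ((m:ℤ)-i), sq_nonneg ((i:ℤ)+1), hi, hcast,
          hb0, ha0]
      have hml : (0:ℤ) ≤ (m:ℤ)-i-1 := by linarith
      have hmr : (0:ℤ) ≤ (m:ℤ)-i := by linarith
      have big := mul_le_mul core ih
        (mul_nonneg hmr hx.le)
        (mul_nonneg (by positivity) (mul_nonneg hmr (by linarith)))
      have hpos : (0:ℤ) < ((m:ℤ)-i)*((m:ℤ)+i+1) := mul_pos (by linarith) (by positivity)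
      have goal2 : ((m:ℤ)-(i+1)) * (3*(m:ℤ)+1)^(2*(i+1)+1) * (((m:ℤ)-i)*((m:ℤ)+i+1))
          ≤ ((m:ℤ)+(i+1)+1) * (3*(m:ℤ)-1)^(2*(i+1)+1) * (((m:ℤ)-i)*((m:ℤ)+i+1)) := by
        have e1 : (3*(m:ℤ)+1)^(2*(i+1)+1) = (3*(m:ℤ)+1)^2 * (3*(m:ℤ)+1)^(2*i+1) := by ring
        have e2 : (3*(m:ℤ)-1)^(2*(i+1)+1) = (3*(m:ℤ)-1)^2 * (3*(m:ℤ)-1)^(2*i+1) := by ring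
        rw [e1, e2]; nlinarith [big]
      exact le_of_mul_le_mul_right goal2 hpos


lemma key2 (m i : ℕ) (hm : 2 ≤ m) (hi : i < m) :
    Nat.choose (2*m) (m+1+i) * ((3*m+1)^(m+1+i) * (3*m-1)^(m-1-i))
      ≤ Nat.choose (2*m) (m-i) * ((3*m+1)^(m-i) * (3*m-1)^(m+i)) := by
  have hsymm : Nat.choose (2*m) (m-1-i) = Nat.choose (2*m) (m+1+i) := by
    have h1 : m+1+i ≤ 2*m := by omega
    have := Nat.choose_symm h1
    rwa [show 2*m - (m+1+i) = m-1-i by omega] at this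
  have hid : Nat.choose (2*m) (m-i) * (m-i) = Nat.choose (2*m) (m-1-i) * (m+1+i) := by
    have := Nat.choose_succ_right_eq (2*m) (m-1-i)
    rwa [show m-1-i+1 = m-i by omega, show 2*m - (m-1-i) = m+1+i by omega] at this
  have hk := key1 m hm i
  have hmul := Nat.mul_le_mul_left (Nat.choose (2*m) (m-1-i) * ((3*m+1)^(m-i) * (3*m-1)^(m-1-i))) hk
  -- rearrange both sides
  have := hmul
  apply Nat.le_of_mul_le_mul_right _ (show 0 < m - i by omega)
  calc Nat.choose (2*m) (m+1+i) * ((3*m+1)^(m+1+i) * (3*m-1)^(m-1-i)) * (m-i)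
      = Nat.choose (2*m) (m-1-i) * ((3*m+1)^(m-i) * (3*m-1)^(m-1-i)) * ((m - i) * (3*m+1)^(2*i+1)) := by
        rw [← hsymm, show m+1+i = (m-i) + (2*i+1) by omega, pow_add]; ring
    _ ≤ Nat.choose (2*m) (m-1-i) * ((3*m+1)^(m-i) * (3*m-1)^(m-1-i)) * ((m + i + 1) * (3*m-1)^(2*i+1)) := hmul
    _ = (Nat.choose (2*m) (m-1-i) * (m+1+i)) * ((3*m+1)^(m-i) * ((3*m-1)^(m-1-i) * (3*m-1)^(2*i+1))) := by ring
    _ = Nat.choose (2*m) (m-i) * ((3*m+1)^(m-i) * (3*m-1)^(m+i)) * (m-i) := by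
        rw [← hid, ← pow_add, show m-1-i + (2*i+1) = m+i by omega]; ring


lemma term_eq (m j : ℕ) (hm : 2 ≤ m) (hj : j ≤ 2*m) :
    ((2*m).choose j : ℝ) * ((3*(m:ℝ)+1)/(6*m))^j * ((3*(m:ℝ)-1)/(6*m))^(2*m-j)
      = ((2*m).choose j * ((3*m+1)^j * (3*m-1)^(2*m-j)) : ℕ) / (6*(m:ℝ))^(2*m) := by
  have hm2 : (2:ℝ) ≤ m := by exact_mod_cast hm
  have hm0 : (0:ℝ) < 6*(m:ℝ) := by linarith
  have h1 : 1 ≤ 3*m := by omega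
  have hpow : (6*(m:ℝ))^j * (6*(m:ℝ))^(2*m-j) = (6*(m:ℝ))^(2*m) := by
    rw [← pow_add, show j + (2*m-j) = 2*m by omega]
  field_simp [div_pow]
  push_cast [h1]
  rw [show (m:ℝ) * 6 = 6 * m by ring, ← hpow, div_pow, div_pow]; field_simp
lemma term_le (m i : ℕ) (hm : 2 ≤ m) (hi : i < m) :
    ((2*m).choose (m+1+i) : ℝ) * ((3*(m:ℝ)+1)/(6*m))^(m+1+i) * ((3*(m:ℝ)-1)/(6*m))^(2*m-(m+1+i))
      ≤ ((2*m).choose (m-i) : ℝ) * ((3*(m:ℝ)+1)/(6*m))^(m-i) * ((3*(m:ℝ)-1)/(6*m))^(2*m-(m-i)) := by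
  have hm2 : (2:ℝ) ≤ m := by exact_mod_cast hm
  have hm0 : (0:ℝ) < (6*(m:ℝ))^(2*m) := by positivity
  rw [term_eq m _ hm (by omega), term_eq m _ hm (by omega),
    show 2*m-(m+1+i) = m-1-i by omega, show 2*m-(m-i) = m+i by omega]
  apply div_le_div_of_nonneg_right ?_ hm0.le |>.trans_eq rfl
  exact_mod_cast key2 m i hm hi

lemma real_main (m : ℕ) (hm : 2 ≤ m) :
    (1:ℝ)/2 ≤ ∑ j ∈ Finset.range (m+1),
      ((2*m).choose j : ℝ) * ((3*(m:ℝ)+1)/(6*m))^j * ((3*(m:ℝ)-1)/(6*m))^(2*m-j) := by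
  have hm2 : (2:ℝ) ≤ m := by exact_mod_cast hm
  set p : ℝ := (3*(m:ℝ)+1)/(6*m) with hp
  set q : ℝ := (3*(m:ℝ)-1)/(6*m) with hq
  have hp0 : 0 ≤ p := by rw [hp]; positivity
  have hq0 : 0 ≤ q := by rw [hq]; apply div_nonneg <;> linarith
  set f : ℕ → ℝ := fun j => ((2*m).choose j : ℝ) * p^j * q^(2*m-j) with hf
  have hf0 : ∀ j, 0 ≤ f j := fun j => by
    rw [hf]; positivity
  have htot : ∑ j ∈ Finset.range (2*m+1), f j = 1 := by
    have := add_pow p q (2*m)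
    have hpq : p + q = 1 := by rw [hp, hq]; field_simp; ring
    rw [hpq, one_pow] at this
    rw [this]
    exact Finset.sum_congr rfl fun j _ => by rw [hf]; ring
  have hsplit : ∑ j ∈ Finset.range (m+1), f j + ∑ j ∈ Finset.Ico (m+1) (2*m+1), f j
      = ∑ j ∈ Finset.range (2*m+1), f j := by
    rw [Finset.range_eq_Ico, Finset.range_eq_Ico]
    exact Finset.sum_Ico_consecutive f (m := 0) (n := m+1) (k := 2*m+1) (by omega) (by omega)
  have hR : ∑ j ∈ Finset.Ico (m+1) (2*m+1), f j = ∑ i ∈ Finset.range m, f (m+1+i) := by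
    rw [Finset.sum_Ico_eq_sum_range, show 2*m+1 - (m+1) = m by omega]
  have hL1 : ∑ i ∈ Finset.range m, f (m-i) = ∑ i ∈ Finset.range m, f (i+1) := by
    have := Finset.sum_range_reflect (fun i => f (i+1)) m
    rw [← this]
    exact Finset.sum_congr rfl fun i hi => by
      rw [Finset.mem_range] at hi
      congr 1; omega
  have hL : ∑ i ∈ Finset.range m, f (m-i) ≤ ∑ j ∈ Finset.range (m+1), f j := by
    rw [hL1, Finset.sum_range_succ' f m]
    have := hf0 0
    linarith
  have hterm : ∑ i ∈ Finset.range m, f (m+1+i) ≤ ∑ i ∈ Finset.range m, f (m-i) := by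
    apply Finset.sum_le_sum
    intro i hi
    rw [Finset.mem_range] at hi
    exact term_le m i hm hi
  linarith [htot, hsplit, hR, hL, hterm]



lemma pi_twoPoint (k : ℕ) (a b : ℝ≥0∞) (ha : a ≠ ⊤) (hb : b ≠ ⊤) (μ : Measure ℝ)
    (hμ : μ = a • Measure.dirac (1:ℝ) + b • Measure.dirac (-1:ℝ)) :
    Measure.pi (fun _ : Fin k => μ)
      = ∑ f : Fin k → Bool, (∏ i, (if f i then a else b)) •
          Measure.dirac (fun i => if f i then (1:ℝ) else -1) := by
  have : IsFiniteMeasure μ := by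
    constructor
    rw [hμ]
    simp only [Measure.add_apply, Measure.smul_apply, smul_eq_mul, measure_univ, mul_one]
    exact ENNReal.add_lt_top.2 ⟨ha.lt_top, hb.lt_top⟩
  apply Measure.pi_eq
  intro s hs
  rw [Measure.finset_sum_apply]
  have hstep : ∀ f : Fin k → Bool,
      ((∏ i, (if f i then a else b)) • Measure.dirac (fun i => if f i then (1:ℝ) else -1))
        (Set.pi Set.univ s)
      = ∏ i, ((if f i then a else b) * (s i).indicator 1 (if f i then (1:ℝ) else -1)) := by
    intro f
    rw [Measure.smul_apply, Measure.dirac_apply' _ (MeasurableSet.univ_pi hs), smul_eq_mul]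
    have hind : (Set.pi Set.univ s).indicator (1 : (Fin k → ℝ) → ℝ≥0∞)
        (fun i => if f i then (1:ℝ) else -1)
        = ∏ i, (s i).indicator (1 : ℝ → ℝ≥0∞) (if f i then (1:ℝ) else -1) := by
      classical
      rw [Set.indicator_apply]
      simp only [Set.mem_univ_pi, Pi.one_apply, Set.indicator_apply]
      rw [Fintype.prod_boole]
      simp
    rw [hind, ← Finset.prod_mul_distrib]
  simp only [hstep]
  have hps := Finset.prod_univ_sum (fun _ : Fin k => (Finset.univ : Finset Bool))
    (fun i b' => (if b' then a else b) * (s i).indicator (1 : ℝ → ℝ≥0∞) (if b' then (1:ℝ) else -1))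
  rw [Fintype.piFinset_univ] at hps
  rw [← hps]
  apply Finset.prod_congr rfl
  intro i _
  rw [hμ, Measure.add_apply, Measure.smul_apply, Measure.smul_apply,
    Measure.dirac_apply' _ (hs i), Measure.dirac_apply' _ (hs i), Fintype.sum_bool]
  simp [smul_eq_mul]


lemma pi_apply_S (k m : ℕ) (hk : k = 2*m) (a b : ℝ≥0∞) (ha : a ≠ ⊤) (hb : b ≠ ⊤)
    (μ : Measure ℝ)
    (hμ : μ = a • Measure.dirac (1:ℝ) + b • Measure.dirac (-1:ℝ)) :
    Measure.pi (fun _ : Fin k => μ) {y | ∑ i, y i ≤ 0}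
      = ∑ j ∈ Finset.range (k+1), k.choose j •
          (if j ≤ m then a^j * b^(k-j) else 0) := by
  classical
  have hS : MeasurableSet {y : Fin k → ℝ | ∑ i, y i ≤ 0} :=
    measurableSet_le (Finset.measurable_sum _ fun i _ => measurable_pi_apply i)
      measurable_const
  rw [pi_twoPoint k a b ha hb μ hμ, Measure.finset_sum_apply]
  set c : (Fin k → Bool) → ℕ := fun f => (Finset.univ.filter (fun i => f i)).card with hc
  set g : ℕ → ℝ≥0∞ := fun j => if j ≤ m then a^j * b^(k-j) else 0 with hg
  have hstep : ∀ f : Fin k → Bool,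
      ((∏ i, (if f i then a else b)) • Measure.dirac (fun i => if f i then (1:ℝ) else -1))
        {y : Fin k → ℝ | ∑ i, y i ≤ 0} = g (c f) := by
    intro f
    rw [Measure.smul_apply, Measure.dirac_apply' _ hS, smul_eq_mul, Set.indicator_apply]
    have hsum : (∑ i, ((fun i => if f i then (1:ℝ) else -1) i)) = 2*((c f : ℝ)) - k := by
      have h2 : ∀ i, (if f i then (1:ℝ) else -1) = 2*(if f i then (1:ℝ) else 0) - 1 := by
        intro i; by_cases h : f i <;> simp [h] <;> norm_num
      simp only [h2]
      rw [Finset.sum_sub_distrib, ← Finset.mul_sum, Finset.sum_boole, Finset.sum_const,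
        Finset.card_univ, Fintype.card_fin]
      simp [hc]
    have hmem : ((fun i => if f i then (1:ℝ) else -1) ∈ {y : Fin k → ℝ | ∑ i, y i ≤ 0})
        ↔ c f ≤ m := by
      rw [Set.mem_setOf_eq, hsum, sub_nonpos]
      constructor
      · intro h
        have : 2 * c f ≤ k := by exact_mod_cast h
        omega
      · intro h
        have : (2 * c f : ℝ) ≤ (k : ℝ) := by
          have : 2 * c f ≤ k := by omega
          exact_mod_cast this
        push_cast at this ⊢
        linarith
    have hprodw : (∏ i, (if f i then a else b)) = a ^ (c f) * b ^ (k - c f) := by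
      rw [Finset.prod_ite (fun _ => a) (fun _ => b), Finset.prod_const, Finset.prod_const]
      have hcc := Finset.card_filter_add_card_filter_not
        (s := (Finset.univ : Finset (Fin k))) (p := fun i => f i = true)
      rw [Finset.card_univ, Fintype.card_fin] at hcc
      congr 1
      congr 1
      simp only [hc]
      omega
    rw [hprodw, hg]
    by_cases h : c f ≤ m
    · simp [hmem.2 h, h, if_pos]
    · have : ¬ ((fun i => if f i then (1:ℝ) else -1) ∈ {y : Fin k → ℝ | ∑ i, y i ≤ 0}) := by
        rw [hmem]; exact h
      simp [this, h]
  simp only [hstep]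
  -- reindex over finsets
  let e : (Fin k → Bool) ≃ Finset (Fin k) :=
  { toFun := fun f => Finset.univ.filter (fun i => f i),
    invFun := fun t => fun i => decide (i ∈ t),
    left_inv := fun f => by funext i; simp,
    right_inv := fun t => by ext i; simp }
  have hre : ∑ f : Fin k → Bool, g (c f) = ∑ t : Finset (Fin k), g t.card := by
    apply Fintype.sum_equiv e
    intro f
    simp [e, hc]
  rw [hre, ← Finset.powerset_univ, Finset.sum_powerset_apply_card g,
    Finset.card_univ, Fintype.card_fin]

/-- For every even `k ≥ 4`, ... -/

theorem stmt6 (k : ℕ) (hk : 4 ≤ k) (heven : Even k)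
    (μ : Measure ℝ)
    (hμ : μ = ENNReal.ofReal (1 / 2 + 1 / (3 * (k : ℝ))) • Measure.dirac (1 : ℝ)
        + ENNReal.ofReal (1 / 2 - 1 / (3 * (k : ℝ))) • Measure.dirac (-1 : ℝ)) :
    MedianConstraint k μ ∧ ∫ x, x ∂μ = 2 / (3 * (k : ℝ)) := by
  have hkR : (4:ℝ) ≤ (k:ℝ) := by exact_mod_cast hk
  have h3k : (0:ℝ) < 3 * k := by linarith
  have hfrac : 1 / (3 * (k:ℝ)) ≤ 1/12 := by
    apply one_div_le_one_div_of_le <;> linarith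
  have hfrac0 : 0 < 1 / (3 * (k:ℝ)) := by positivity
  set p : ℝ := 1 / 2 + 1 / (3 * (k : ℝ)) with hpdef
  set q : ℝ := 1 / 2 - 1 / (3 * (k : ℝ)) with hqdef
  have hp0 : 0 ≤ p := by rw [hpdef]; linarith
  have hq0 : 0 ≤ q := by rw [hqdef]; linarith
  constructor
  · -- median constraint
    obtain ⟨m, rfl⟩ := heven
    rw [show m + m = 2*m from by ring] at hk hpdef hqdef hkR h3k hfrac hfrac0 ⊢
    have hm : 2 ≤ m := by omega
    have hmR : (2:ℝ) ≤ (m:ℝ) := by exact_mod_cast hm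
    have hp : p = (3*(m:ℝ)+1)/(6*m) := by
      rw [hpdef]; push_cast; field_simp; ring
    have hq : q = (3*(m:ℝ)-1)/(6*m) := by
      rw [hqdef]; push_cast; field_simp; ring
    unfold MedianConstraint
    rw [pi_apply_S (2*m) m rfl (ENNReal.ofReal p) (ENNReal.ofReal q)
      ENNReal.ofReal_ne_top ENNReal.ofReal_ne_top μ hμ]
    have hite : ∀ j ∈ Finset.range (2*m+1), (2*m).choose j •
        (if j ≤ m then (ENNReal.ofReal p)^j * (ENNReal.ofReal q)^(2*m-j) else 0)
        = if j ≤ m then (2*m).choose j • ((ENNReal.ofReal p)^j * (ENNReal.ofReal q)^(2*m-j)) else 0 := by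
      intro j _
      split <;> simp
    rw [Finset.sum_congr rfl hite, ← Finset.sum_filter,
      show Finset.filter (fun j => j ≤ m) (Finset.range (2*m+1)) = Finset.range (m+1) from by
        ext j; simp [Finset.mem_filter, Finset.mem_range]; omega]
    have hconv : ∑ j ∈ Finset.range (m+1),
        (2*m).choose j • ((ENNReal.ofReal p)^j * (ENNReal.ofReal q)^(2*m-j))
        = ENNReal.ofReal (∑ j ∈ Finset.range (m+1),
            ((2*m).choose j : ℝ) * p^j * q^(2*m-j)) := by
      rw [ENNReal.ofReal_sum_of_nonneg (fun j _ => by positivity)]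
      apply Finset.sum_congr rfl
      intro j _
      rw [nsmul_eq_mul, ← ENNReal.ofReal_pow hp0, ← ENNReal.ofReal_pow hq0,
        ← ENNReal.ofReal_natCast, ← ENNReal.ofReal_mul (by positivity),
        ← ENNReal.ofReal_mul (by positivity)]
      rw [mul_assoc]
    rw [hconv]
    have h12 : (1 : ℝ≥0∞) / 2 = ENNReal.ofReal (1/2) := by
      rw [ENNReal.ofReal_div_of_pos (by norm_num), ENNReal.ofReal_one, ENNReal.ofReal_ofNat]
    rw [h12]
    apply ENNReal.ofReal_le_ofReal
    have := real_main m hm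
    rw [← hp, ← hq] at this
    exact this
  · -- expectation
    rw [hμ]
    have hint : ∀ x : ℝ, Integrable (fun t : ℝ => t) (Measure.dirac x) := by
      intro x
      refine ⟨measurable_id.aestronglyMeasurable, ?_⟩
      simp [HasFiniteIntegral, lintegral_dirac]
    have h1 : Integrable (fun t : ℝ => t) (ENNReal.ofReal p • Measure.dirac (1:ℝ)) :=
      (hint 1).smul_measure ENNReal.ofReal_ne_top
    have h2 : Integrable (fun t : ℝ => t) (ENNReal.ofReal q • Measure.dirac (-1:ℝ)) :=
      (hint (-1)).smul_measure ENNReal.ofReal_ne_top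
    rw [integral_add_measure h1 h2, integral_smul_measure, integral_smul_measure,
      integral_dirac, integral_dirac, ENNReal.toReal_ofReal hp0, ENNReal.toReal_ofReal hq0]
    rw [hpdef, hqdef]
    push_cast
    simp only [smul_eq_mul]
    ring
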